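/- arXiv:1603.04154 — 4 statements merged into one kernel-verified Lean document; each statement's English description precedes it below -/
import Mathlib

section
/- For every vector x ∈ ℝ^n one has ∑_{i=1}^n ⟨A_i/‖A_i‖, x⟩² ≥ ‖x‖² / (τ ‖A⁻¹‖)², where τ = max_i ‖A_i‖. -/
open scoped RealInnerProductSpace

/-- For every vector `x ∈ ℝ^n`,
`∑_{i=1}^n ⟨A_i/‖A_i‖, x⟩² ≥ ‖x‖² / (τ ‖A⁻¹‖)²`, where `τ = max_i ‖A_i‖`,
`A` is an invertible real `n × n` matrix with nonzero rows `A_i`, and `‖A⁻¹‖`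
is the ℓ²-operator norm of `A⁻¹`. -/
theorem stmt0 (n : ℕ) (hn : 1 ≤ n)
    (A : Matrix (Fin n) (Fin n) ℝ)
    (r : Fin n → EuclideanSpace ℝ (Fin n))
    (hrow : ∀ i j, A i j = r i j)
    (hinv : IsUnit A.det)
    (hne : ∀ i, r i ≠ 0)
    (τ : ℝ) (hτ : IsGreatest (Set.range fun i => ‖r i‖) τ)
    (x : EuclideanSpace ℝ (Fin n)) :
    ∑ i, ⟪(‖r i‖)⁻¹ • r i, x⟫ ^ 2 ≥
      ‖x‖ ^ 2 / (τ * ‖Matrix.toEuclideanCLM (𝕜 := ℝ) A⁻¹‖) ^ 2 := by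
  set T := Matrix.toEuclideanCLM (𝕜 := ℝ) A with hT
  set S := Matrix.toEuclideanCLM (𝕜 := ℝ) A⁻¹ with hS
  have hsum_nonneg : (0:ℝ) ≤ ∑ i, ⟪(‖r i‖)⁻¹ • r i, x⟫ ^ 2 :=
    Finset.sum_nonneg fun i _ => sq_nonneg _
  have hτmem : ∀ i, ‖r i‖ ≤ τ := fun i => hτ.2 ⟨i, rfl⟩
  have i0 : Fin n := ⟨0, hn⟩
  have hτpos : 0 < τ := lt_of_lt_of_le (norm_pos_iff.mpr (hne i0)) (hτmem i0)
  by_cases hS0 : ‖S‖ = 0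
  · rw [hS0, mul_zero]
    simpa using hsum_nonneg
  have hSpos : 0 < ‖S‖ := lt_of_le_of_ne (norm_nonneg _) (Ne.symm hS0)
  -- S (T x) = x
  have hST : S (T x) = x := by
    have h1 : S * T = 1 := by
      rw [hS, hT, ← map_mul, Matrix.nonsing_inv_mul A hinv, map_one]
    calc S (T x) = (S * T) x := rfl
    _ = x := by rw [h1]; rfl
  -- inner r i x = (T x) i
  have hinner : ∀ i, ⟪r i, x⟫ = (T x) i := by
    intro i
    have h2 : (T x) i = Matrix.toLin' A (WithLp.equiv _ _ x) i := by
      rw [hT]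
      exact congrFun (Matrix.ofLp_toEuclideanCLM A x) i
    rw [h2]
    simp [Matrix.toLin'_apply, Matrix.mulVec, dotProduct, hrow, mul_comm,
      PiLp.inner_apply, RCLike.inner_apply]
  -- ‖T x‖² = ∑ (T x i)²
  have hnorm_sq : ‖T x‖ ^ 2 = ∑ i, (T x) i ^ 2 := by
    rw [EuclideanSpace.norm_eq, Real.sq_sqrt (Finset.sum_nonneg fun i _ => sq_nonneg _)]
    simp [sq_abs]
  -- lower bound LHS by τ⁻² ∑ (T x i)²
  have hstep : ∀ i, (T x) i ^ 2 / τ ^ 2 ≤ ⟪(‖r i‖)⁻¹ • r i, x⟫ ^ 2 := by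
    intro i
    rw [real_inner_smul_left, hinner i, mul_pow, inv_pow, ← div_eq_inv_mul]
    apply div_le_div_of_nonneg_left (sq_nonneg _) (pow_pos (norm_pos_iff.mpr (hne i)) 2)
    exact pow_le_pow_left₀ (norm_nonneg _) (hτmem i) 2
  have hLB : (∑ i, (T x) i ^ 2) / τ ^ 2 ≤ ∑ i, ⟪(‖r i‖)⁻¹ • r i, x⟫ ^ 2 := by
    rw [Finset.sum_div]
    exact Finset.sum_le_sum fun i _ => hstep i
  -- ‖x‖ ≤ ‖S‖ * ‖T x‖
  have hx : ‖x‖ ≤ ‖S‖ * ‖T x‖ := by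
    calc ‖x‖ = ‖S (T x)‖ := by rw [hST]
    _ ≤ ‖S‖ * ‖T x‖ := S.le_opNorm (T x)
  have hx2 : ‖x‖ ^ 2 ≤ ‖S‖ ^ 2 * ‖T x‖ ^ 2 := by
    rw [← mul_pow]
    exact pow_le_pow_left₀ (norm_nonneg _) hx 2
  have key : ‖x‖ ^ 2 / (τ * ‖S‖) ^ 2 ≤ ‖T x‖ ^ 2 / τ ^ 2 := by
    rw [div_le_div_iff₀ (by positivity) (by positivity)]
    calc ‖x‖ ^ 2 * τ ^ 2 ≤ (‖S‖ ^ 2 * ‖T x‖ ^ 2) * τ ^ 2 :=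
      mul_le_mul_of_nonneg_right hx2 (by positivity)
    _ = ‖T x‖ ^ 2 * (τ * ‖S‖) ^ 2 := by ring
  calc ‖x‖ ^ 2 / (τ * ‖S‖) ^ 2 ≤ ‖T x‖ ^ 2 / τ ^ 2 := key
  _ = (∑ i, (T x) i ^ 2) / τ ^ 2 := by rw [hnorm_sq]
  _ ≤ ∑ i, ⟪(‖r i‖)⁻¹ • r i, x⟫ ^ 2 := hLB
end

section
/- If each agent's initial state satisfies ⟨A_i, x_i(0)⟩ = b_i and the states are updated by x_i(t+1) = x_i(t) − (1/d_i) P_i (d_i x_i(t) − ∑_{j : α_{ij}=1} x_j(t)), then the errors y_i(t) = x_i(t) − x* satisfy the error updating equation y_i(t+1) = (1/d_i) P_i ∑_{j : α_{ij}=1} P_j y_j(t) for every agent i and every t ≥ 0. -/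
open scoped RealInnerProductSpace

/-- The orthogonal projection `P_i = I − A_i A_iᵀ/‖A_i‖²` of `ℝ^n` onto
`ker A_i`, as a map. -/
noncomputable def proj {n : ℕ} (r : Fin n → EuclideanSpace ℝ (Fin n)) (i : Fin n)
    (x : EuclideanSpace ℝ (Fin n)) : EuclideanSpace ℝ (Fin n) :=
  x - (⟪r i, x⟫ / ‖r i‖ ^ 2) • r i

lemma inner_proj {n : ℕ} (r : Fin n → EuclideanSpace ℝ (Fin n)) (i : Fin n)
    (h : r i ≠ 0) (v : EuclideanSpace ℝ (Fin n)) :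
    ⟪r i, proj r i v⟫ = 0 := by
  have h2 : ‖r i‖ ^ 2 ≠ 0 := pow_ne_zero _ (norm_ne_zero_iff.mpr h)
  rw [proj, inner_sub_right, real_inner_smul_right, real_inner_self_eq_norm_sq,
    div_mul_cancel₀ _ h2, sub_self]

lemma proj_of_inner_eq_zero {n : ℕ} (r : Fin n → EuclideanSpace ℝ (Fin n)) (i : Fin n)
    (v : EuclideanSpace ℝ (Fin n)) (h : ⟪r i, v⟫ = 0) :
    proj r i v = v := by simp [proj, h]

lemma proj_sub {n : ℕ} (r : Fin n → EuclideanSpace ℝ (Fin n)) (i : Fin n)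
    (u v : EuclideanSpace ℝ (Fin n)) :
    proj r i (u - v) = proj r i u - proj r i v := by
  simp only [proj, inner_sub_right, sub_div, sub_smul]
  abel

lemma proj_smul {n : ℕ} (r : Fin n → EuclideanSpace ℝ (Fin n)) (i : Fin n)
    (c : ℝ) (v : EuclideanSpace ℝ (Fin n)) :
    proj r i (c • v) = c • proj r i v := by
  simp only [proj, real_inner_smul_right, mul_div_assoc, smul_sub, smul_smul]

/-- If each agent's initial state satisfies `⟨A_i, x_i(0)⟩ = b_i` and
the states are updated by
`x_i(t+1) = x_i(t) − (1/d_i) P_i (d_i x_i(t) − ∑_{j : α_{ij}=1} x_j(t))`,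
then the errors `y_i(t) = x_i(t) − x*` satisfy
`y_i(t+1) = (1/d_i) P_i ∑_{j : α_{ij}=1} P_j y_j(t)` for every agent `i` and `t ≥ 0`. -/
theorem stmt10 (n : ℕ) (hn : 1 ≤ n)
    (A : Matrix (Fin n) (Fin n) ℝ)
    (r : Fin n → EuclideanSpace ℝ (Fin n))
    (hrow : ∀ i j, A i j = r i j)
    (hinv : IsUnit A.det)
    (hne : ∀ i, r i ≠ 0)
    (xs : EuclideanSpace ℝ (Fin n)) (b : Fin n → ℝ)
    (hb : ∀ j, b j = ⟪r j, xs⟫)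
    (α : Matrix (Fin n) (Fin n) ℝ)
    (hα01 : ∀ i j, α i j = 0 ∨ α i j = 1)
    (hsym : ∀ i j, α i j = α j i)
    (hself : ∀ i, α i i = 1)
    (d : Fin n → ℝ) (hd : ∀ i, d i = ∑ j, α i j)
    (x : ℕ → Fin n → EuclideanSpace ℝ (Fin n))
    (hinit : ∀ i, ⟪r i, x 0 i⟫ = b i)
    (hupdate : ∀ t i, x (t + 1) i =
      x t i - (d i)⁻¹ •
        proj r i (d i • x t i -
          ∑ j ∈ Finset.univ.filter (fun j => α i j = 1), x t j)) :
    ∀ t i, x (t + 1) i - xs =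
      (d i)⁻¹ •
        proj r i (∑ j ∈ Finset.univ.filter (fun j => α i j = 1),
          proj r j (x t j - xs)) := by
  set S : Fin n → Finset (Fin n) := fun i => Finset.univ.filter (fun j => α i j = 1)
    with hS
  have hcard : ∀ i, d i = ((S i).card : ℝ) := by
    intro i
    rw [hd]
    have : ∀ j, α i j = if α i j = 1 then (1 : ℝ) else 0 := by
      intro j; rcases hα01 i j with h | h <;> simp [h]
    rw [Finset.sum_congr rfl fun j _ => this j]
    simp [hS, Finset.sum_boole]
  have hdne : ∀ i, d i ≠ 0 := by
    intro i
    rw [hcard]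
    have : i ∈ S i := by simp [hS, hself i]
    have := Finset.card_pos.mpr ⟨i, this⟩
    positivity
  have hinv_t : ∀ t i, ⟪r i, x t i⟫ = b i := by
    intro t
    induction t with
    | zero => exact hinit
    | succ t ih =>
      intro i
      rw [hupdate, inner_sub_right, real_inner_smul_right, inner_proj r i (hne i),
        mul_zero, sub_zero]
      exact ih i
  intro t i
  have hy : ∀ j, proj r j (x t j - xs) = x t j - xs := fun j =>
    proj_of_inner_eq_zero r j _ (by rw [inner_sub_right, hinv_t t j, hb, sub_self])
  rw [Finset.sum_congr rfl fun j _ => hy j, hupdate]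
  have hsumxs : ∑ _j ∈ S i, xs = d i • xs := by
    rw [Finset.sum_const, hcard, Nat.cast_smul_eq_nsmul]
  have harg : d i • x t i - ∑ j ∈ S i, x t j
      = d i • (x t i - xs) - ∑ j ∈ S i, (x t j - xs) := by
    rw [Finset.sum_sub_distrib, smul_sub, hsumxs]
    abel
  rw [harg, proj_sub, proj_smul, hy i, smul_sub, smul_smul,
    inv_mul_cancel₀ (hdne i), one_smul]
  abel
end

section
/- If each agent's initial state satisfies ⟨A_i, x_i(0)⟩ = b_i and the states are updated by x_i(t+1) = x_i(t) − (1/d_i) P_i (d_i x_i(t) − ∑_{j : α_{ij}=1} x_j(t)), then the stacked error vector y(t) = col(y_1(t), …, y_n(t)) ∈ ℝ^{n²}, with y_i(t) = x_i(t) − x*, satisfies y(t) = M^t y(0) for all t ≥ 0, where M = P_diag ((D⁻¹ α) ⊗ I_n) P_diag, P_diag = diag(P_1, …, P_n) ∈ ℝ^{n² × n²}, D = diag(d_1, …, d_n), and ⊗ denotes the Kronecker product. -/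
open Kronecker

/-- The orthogonal projection matrix `P_i = I − A_i A_iᵀ/‖A_i‖²` onto `ker A_i`,
where `A_i` is the `i`-th row of `A` (viewed as a column vector). -/
noncomputable def projMat {n : ℕ} (A : Matrix (Fin n) (Fin n) ℝ) (i : Fin n) :
    Matrix (Fin n) (Fin n) ℝ :=
  1 - (∑ a, A i a ^ 2)⁻¹ • Matrix.vecMulVec (A i) (A i)

/-- The block-diagonal matrix `P_diag = diag(P_1, …, P_n) ∈ ℝ^{n² × n²}`,
indexed so that the pair `(i, a)` means coordinate `a` of agent `i`'s block. -/
noncomputable def Pdiag {n : ℕ} (A : Matrix (Fin n) (Fin n) ℝ) :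
    Matrix (Fin n × Fin n) (Fin n × Fin n) ℝ :=
  Matrix.of fun p q => if p.1 = q.1 then projMat A p.1 p.2 q.2 else 0

/-- The updating matrix `M = P_diag ((D⁻¹ α) ⊗ I_n) P_diag`. -/
noncomputable def Mmat {n : ℕ} (A α : Matrix (Fin n) (Fin n) ℝ) (d : Fin n → ℝ) :
    Matrix (Fin n × Fin n) (Fin n × Fin n) ℝ :=
  Pdiag A * (((Matrix.diagonal d)⁻¹ * α) ⊗ₖ (1 : Matrix (Fin n) (Fin n) ℝ)) * Pdiag A

lemma projVec {n : ℕ} (A : Matrix (Fin n) (Fin n) ℝ) (i : Fin n) (v : Fin n → ℝ) (a : Fin n) :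
    (projMat A i).mulVec v a
      = v a - (∑ c, A i c ^ 2)⁻¹ * (A i a * ∑ c, A i c * v c) := by
  simp only [projMat, Matrix.mulVec, dotProduct, Matrix.sub_apply,
    Matrix.smul_apply, Matrix.one_apply, Matrix.vecMulVec_apply, smul_eq_mul, sub_mul,
    ite_mul, one_mul, zero_mul, Finset.sum_sub_distrib, Finset.sum_ite_eq,
    Finset.mem_univ, if_true]
  congr 1
  rw [Finset.mul_sum, Finset.mul_sum]
  exact Finset.sum_congr rfl (fun c _ => by ring)

lemma proj_fixed {n : ℕ} (A : Matrix (Fin n) (Fin n) ℝ) (i : Fin n) (v : Fin n → ℝ)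
    (h : ∑ c, A i c * v c = 0) : (projMat A i).mulVec v = v := by
  funext a; rw [projVec, h]; ring

lemma proj_orth {n : ℕ} (A : Matrix (Fin n) (Fin n) ℝ) (i : Fin n)
    (hs : (∑ c, A i c ^ 2) ≠ 0) (v : Fin n → ℝ) :
    ∑ a, A i a * (projMat A i).mulVec v a = 0 := by
  have hS : ∑ a, A i a * (projMat A i).mulVec v a
      = (∑ c, A i c * v c)
        - (∑ c, A i c ^ 2) * ((∑ c, A i c ^ 2)⁻¹ * ∑ c, A i c * v c) := by
    simp only [projVec, mul_sub, Finset.sum_sub_distrib]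
    congr 1
    have h : ∀ a ∈ Finset.univ, A i a * ((∑ c, A i c ^ 2)⁻¹ * (A i a * ∑ c, A i c * v c))
        = A i a ^ 2 * ((∑ c, A i c ^ 2)⁻¹ * ∑ c, A i c * v c) := fun a _ => by ring
    rw [Finset.sum_congr rfl h, ← Finset.sum_mul]
  rw [hS, ← mul_assoc, mul_inv_cancel₀ hs, one_mul, sub_self]

lemma Pdiag_mulVec {n : ℕ} (A : Matrix (Fin n) (Fin n) ℝ) (v : Fin n × Fin n → ℝ)
    (p : Fin n × Fin n) :
    (Pdiag A).mulVec v p = (projMat A p.1).mulVec (fun e => v (p.1, e)) p.2 := by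
  simp [Pdiag, Matrix.mulVec, dotProduct, Fintype.sum_prod_type, ite_mul,
    Finset.sum_ite_eq]

lemma K_mulVec {n : ℕ} (B : Matrix (Fin n) (Fin n) ℝ) (v : Fin n × Fin n → ℝ)
    (p : Fin n × Fin n) :
    ((B ⊗ₖ (1 : Matrix (Fin n) (Fin n) ℝ)).mulVec v) p
      = ∑ j, B p.1 j * v (j, p.2) := by
  simp [Matrix.mulVec, dotProduct, Fintype.sum_prod_type, Matrix.one_apply,
    mul_ite, Finset.sum_ite_eq]

/-- If each agent's initial state satisfies `⟨A_i, x_i(0)⟩ = b_i` and the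
states are updated by
`x_i(t+1) = x_i(t) − (1/d_i) P_i (d_i x_i(t) − ∑_{j : α_{ij}=1} x_j(t))`, then the
stacked error vector `y(t) = col(y_1(t),…,y_n(t)) ∈ ℝ^{n²}`, `y_i(t) = x_i(t) − x*`,
satisfies `y(t) = M^t y(0)` for all `t ≥ 0`, where
`M = P_diag ((D⁻¹ α) ⊗ I_n) P_diag`, `P_diag = diag(P_1,…,P_n)`, `D = diag(d)`. -/
theorem stmt11 (n : ℕ) (hn : 1 ≤ n)
    (A : Matrix (Fin n) (Fin n) ℝ)
    (hinv : IsUnit A.det)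
    (hne : ∀ i, A i ≠ 0)
    (xs : Fin n → ℝ) (b : Fin n → ℝ)
    (hb : ∀ j, b j = ∑ a, A j a * xs a)
    (α : Matrix (Fin n) (Fin n) ℝ)
    (hα01 : ∀ i j, α i j = 0 ∨ α i j = 1)
    (hsym : ∀ i j, α i j = α j i)
    (hself : ∀ i, α i i = 1)
    (d : Fin n → ℝ) (hd : ∀ i, d i = ∑ j, α i j)
    (x : ℕ → Fin n → Fin n → ℝ)
    (hinit : ∀ i, ∑ a, A i a * x 0 i a = b i)
    (hupdate : ∀ t i, x (t + 1) i =
      x t i - (d i)⁻¹ •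
        (projMat A i).mulVec (d i • x t i -
          ∑ j ∈ Finset.univ.filter (fun j => α i j = 1), x t j)) :
    ∀ t, (fun p : Fin n × Fin n => x t p.1 p.2 - xs p.2) =
      ((Mmat A α d) ^ t).mulVec (fun p : Fin n × Fin n => x 0 p.1 p.2 - xs p.2) := by
  -- sum of squares of rows nonzero
  have hs : ∀ i, (∑ c, A i c ^ 2) ≠ 0 := by
    intro i h
    apply hne i
    funext c
    have hnn : ∀ a ∈ Finset.univ, (0:ℝ) ≤ A i a ^ 2 := fun a _ => sq_nonneg _
    have := (Finset.sum_eq_zero_iff_of_nonneg hnn).mp h c (Finset.mem_univ c)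
    exact (pow_eq_zero_iff two_ne_zero).mp this
  -- degrees nonzero
  have hdne : ∀ i, d i ≠ 0 := by
    intro i
    have h1 : (1:ℝ) ≤ d i := by
      rw [hd i]
      have := Finset.single_le_sum (f := α i)
        (fun j _ => by rcases hα01 i j with h | h <;> simp [h]) (Finset.mem_univ i)
      rw [hself i] at this; exact this
    linarith
  -- invariant
  have hinv_all : ∀ t i, ∑ a, A i a * x t i a = b i := by
    intro t
    induction t with
    | zero => exact hinit
    | succ t ih =>
      intro i
      rw [hupdate t i]
      simp only [Pi.sub_apply, Pi.smul_apply, smul_eq_mul, mul_sub, Finset.sum_sub_distrib]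
      have h2 : ∑ a, A i a * ((d i)⁻¹ *
          (projMat A i).mulVec (d i • x t i -
            ∑ j ∈ Finset.univ.filter (fun j => α i j = 1), x t j) a)
          = (d i)⁻¹ * ∑ a, A i a * (projMat A i).mulVec (d i • x t i -
            ∑ j ∈ Finset.univ.filter (fun j => α i j = 1), x t j) a := by
        rw [Finset.mul_sum]; exact Finset.sum_congr rfl (fun a _ => by ring)
      rw [h2, proj_orth A i (hs i), mul_zero, sub_zero, ih i]
  -- orthogonality of errors
  set z : ℕ → Fin n → Fin n → ℝ := fun t j e => x t j e - xs e with hz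
  have hy_inv : ∀ t j, ∑ c, A j c * z t j c = 0 := by
    intro t j
    simp only [hz, mul_sub, Finset.sum_sub_distrib, hinv_all t j, ← hb j, sub_self]
  have hyfix : ∀ t j, (projMat A j).mulVec (z t j) = z t j :=
    fun t j => proj_fixed A j _ (hy_inv t j)
  -- diagonal inverse entries
  have hdiaginv : ∀ i j, ((Matrix.diagonal d)⁻¹ * α) i j = (d i)⁻¹ * α i j := by
    have hdi : (Matrix.diagonal d)⁻¹ = Matrix.diagonal (fun i => (d i)⁻¹) := by
      apply Matrix.inv_eq_right_inv
      rw [Matrix.diagonal_mul_diagonal,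
        show (fun i => d i * (d i)⁻¹) = fun _ => (1:ℝ) from
          funext fun i => mul_inv_cancel₀ (hdne i),
        Matrix.diagonal_one]
    intro i j
    rw [hdi, Matrix.diagonal_mul]
  -- one-step evolution
  have hstep : ∀ t, (fun p : Fin n × Fin n => z (t+1) p.1 p.2)
      = (Mmat A α d).mulVec (fun p : Fin n × Fin n => z t p.1 p.2) := by
    intro t
    set y : Fin n × Fin n → ℝ := fun p => z t p.1 p.2 with hy
    have h1 : (Pdiag A).mulVec y = y := by
      funext q
      rw [Pdiag_mulVec]
      exact congrFun (hyfix t q.1) q.2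
    funext p
    obtain ⟨i, a⟩ := p
    -- RHS computation
    have hrhs : (Mmat A α d).mulVec y (i, a)
        = (projMat A i).mulVec (fun e => ∑ k, ((d i)⁻¹ * α i k) • z t k e) a := by
      rw [Mmat, ← Matrix.mulVec_mulVec, ← Matrix.mulVec_mulVec, h1, Pdiag_mulVec]
      congr 1
      funext e
      rw [K_mulVec]
      exact Finset.sum_congr rfl (fun k _ => by rw [hdiaginv]; rfl)
    rw [hrhs]
    -- linearity of projection
    have hlin : (projMat A i).mulVec (fun e => ∑ k, ((d i)⁻¹ * α i k) • z t k e)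
        = ∑ k, ((d i)⁻¹ * α i k) • (projMat A i).mulVec (z t k) := by
      have : (fun e => ∑ k, ((d i)⁻¹ * α i k) • z t k e)
          = ∑ k, ((d i)⁻¹ * α i k) • z t k := by
        funext e; simp [Finset.sum_apply]
      rw [this, ← Matrix.mulVecLin_apply, map_sum]
      simp [Matrix.mulVecLin_apply]
    rw [hlin]
    -- LHS computation
    have hfilter : (∑ j ∈ Finset.univ.filter (fun j => α i j = 1), x t j)
        = ∑ j, α i j • x t j := by
      rw [Finset.sum_filter]
      exact Finset.sum_congr rfl (fun j _ => by rcases hα01 i j with h | h <;> simp [h])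
    have hw : d i • x t i - ∑ j ∈ Finset.univ.filter (fun j => α i j = 1), x t j
        = d i • z t i - ∑ j, α i j • z t j := by
      rw [hfilter]
      funext e
      simp only [Pi.sub_apply, Pi.smul_apply, Finset.sum_apply, smul_eq_mul, hz,
        mul_sub, Finset.sum_sub_distrib, ← Finset.sum_mul, ← hd i]
      ring
    have hPw : (projMat A i).mulVec (d i • z t i - ∑ j, α i j • z t j)
        = d i • (projMat A i).mulVec (z t i) - ∑ j, α i j • (projMat A i).mulVec (z t j) := by
      rw [← Matrix.mulVecLin_apply, map_sub, map_smul, map_sum]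
      simp [Matrix.mulVecLin_apply]
    have h0 : z (t + 1) i a = (x t i a - xs a) - (d i)⁻¹ *
        ((projMat A i).mulVec (d i • x t i -
          ∑ j ∈ Finset.univ.filter (fun j => α i j = 1), x t j) a) := by
      simp only [hz]
      rw [hupdate t i]
      simp only [Pi.sub_apply, Pi.smul_apply, smul_eq_mul]
      ring
    rw [h0, hw, hPw]
    simp only [Pi.sub_apply, Pi.smul_apply, Finset.sum_apply, smul_eq_mul, hyfix t i]
    rw [mul_sub, show (d i)⁻¹ * (d i * z t i a) = z t i a from by
      rw [← mul_assoc, inv_mul_cancel₀ (hdne i), one_mul]]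
    simp only [hz, Finset.mul_sum]
    ring_nf
  -- induction
  intro t
  induction t with
  | zero => simp [Matrix.one_mulVec]
  | succ t ih =>
    rw [pow_succ', ← Matrix.mulVec_mulVec, ← ih]
    exact hstep t
end

section
/- Consider the distributed algorithm on the complete graph with self-loops on n vertices, so that d_i = n and every agent is a neighbor of every agent: x_i(t+1) = x_i(t) − (1/n) P_i (n x_i(t) − ∑_{j=1}^n x_j(t)). If each initial state satisfies ⟨A_i, x_i(0)⟩ = b_i, then every agent's state converges to the true solution: lim_{t→∞} x_i(t) = x* for every i ∈ {1,…,n}. -/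
open scoped RealInnerProductSpace

noncomputable def PC {n : ℕ} (r : Fin n → EuclideanSpace ℝ (Fin n)) (i : Fin n) :
    EuclideanSpace ℝ (Fin n) →L[ℝ] EuclideanSpace ℝ (Fin n) :=
  ContinuousLinearMap.id ℝ _ - (‖r i‖ ^ 2)⁻¹ • ((innerSL ℝ (r i)).smulRight (r i))


lemma PC_apply {n : ℕ} (r : Fin n → EuclideanSpace ℝ (Fin n)) (i : Fin n)
    (x : EuclideanSpace ℝ (Fin n)) : PC r i x = proj r i x := by
  show x - (‖r i‖ ^ 2)⁻¹ • (⟪r i, x⟫ • r i) = _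
  rw [proj, smul_smul, div_eq_mul_inv, mul_comm]

lemma inner_PC {n : ℕ} (r : Fin n → EuclideanSpace ℝ (Fin n)) (i : Fin n)
    (hne : r i ≠ 0) (x : EuclideanSpace ℝ (Fin n)) : ⟪r i, PC r i x⟫ = 0 := by
  have h : ‖r i‖ ^ 2 ≠ 0 := pow_ne_zero _ (norm_ne_zero_iff.mpr hne)
  rw [PC_apply, proj, inner_sub_right, real_inner_smul_right,
    real_inner_self_eq_norm_sq]
  field_simp
  ring

lemma PC_of_inner_zero {n : ℕ} (r : Fin n → EuclideanSpace ℝ (Fin n)) (i : Fin n)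
    (x : EuclideanSpace ℝ (Fin n)) (h : ⟪r i, x⟫ = 0) : PC r i x = x := by
  rw [PC_apply, proj, h]; simp

lemma norm_PC_sq {n : ℕ} (r : Fin n → EuclideanSpace ℝ (Fin n)) (i : Fin n)
    (hne : r i ≠ 0) (x : EuclideanSpace ℝ (Fin n)) :
    ‖PC r i x‖ ^ 2 = ‖x‖ ^ 2 - ⟪r i, x⟫ ^ 2 / ‖r i‖ ^ 2 := by
  have h : ‖r i‖ ^ 2 ≠ 0 := pow_ne_zero _ (norm_ne_zero_iff.mpr hne)
  rw [PC_apply, proj, norm_sub_sq_real, real_inner_smul_right, norm_smul,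
    real_inner_comm x (r i), Real.norm_eq_abs, mul_pow, sq_abs]
  field_simp
  ring

lemma norm_PC_le {n : ℕ} (r : Fin n → EuclideanSpace ℝ (Fin n)) (i : Fin n)
    (hne : r i ≠ 0) (x : EuclideanSpace ℝ (Fin n)) : ‖PC r i x‖ ≤ ‖x‖ := by
  have := norm_PC_sq r i hne x
  nlinarith [norm_nonneg (PC r i x), norm_nonneg x, sq_nonneg (⟪r i, x⟫),
    pow_pos (norm_pos_iff.mpr hne) 2, div_nonneg (sq_nonneg (⟪r i, x⟫)) (sq_nonneg ‖r i‖)]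

lemma norm_PC_lt {n : ℕ} (r : Fin n → EuclideanSpace ℝ (Fin n)) (i : Fin n)
    (hne : r i ≠ 0) (x : EuclideanSpace ℝ (Fin n)) (h : ⟪r i, x⟫ ≠ 0) :
    ‖PC r i x‖ < ‖x‖ := by
  have hsq := norm_PC_sq r i hne x
  have h1 : (0:ℝ) < ⟪r i, x⟫ ^ 2 / ‖r i‖ ^ 2 :=
    div_pos (by positivity) (pow_pos (norm_pos_iff.mpr hne) 2)
  nlinarith [norm_nonneg (PC r i x), norm_nonneg x]

lemma norm_M_lt_one {n : ℕ} (hn : 1 ≤ n) (r : Fin n → EuclideanSpace ℝ (Fin n))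
    (hne : ∀ i, r i ≠ 0)
    (hsep : ∀ y : EuclideanSpace ℝ (Fin n), y ≠ 0 → ∃ i, ⟪r i, y⟫ ≠ 0) :
    ‖(n:ℝ)⁻¹ • ∑ i, PC r i‖ < 1 := by
  set M : EuclideanSpace ℝ (Fin n) →L[ℝ] EuclideanSpace ℝ (Fin n) := (n:ℝ)⁻¹ • ∑ i, PC r i with hM
  have hn0 : (0:ℝ) < n := by exact_mod_cast Nat.lt_of_lt_of_le Nat.zero_lt_one hn
  -- pointwise strict contraction
  have hpt : ∀ y : EuclideanSpace ℝ (Fin n), y ≠ 0 → ‖M y‖ < ‖y‖ := by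
    intro y hy
    obtain ⟨i0, hi0⟩ := hsep y hy
    have h1 : ‖M y‖ ≤ (n:ℝ)⁻¹ * ‖∑ i, PC r i y‖ := by
      rw [hM, ContinuousLinearMap.smul_apply, norm_smul, Real.norm_eq_abs,
        abs_of_nonneg (by positivity)]
      simp [ContinuousLinearMap.sum_apply]
    have h2 : ‖∑ i, PC r i y‖ ≤ ∑ i, ‖PC r i y‖ := norm_sum_le _ _
    have h3 : ∑ i, ‖PC r i y‖ < ∑ _i : Fin n, ‖y‖ := by
      apply Finset.sum_lt_sum (fun i _ => norm_PC_le r i (hne i) y)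
      exact ⟨i0, Finset.mem_univ _, norm_PC_lt r i0 (hne i0) y hi0⟩
    have h4 : ∑ _i : Fin n, ‖y‖ = (n:ℝ) * ‖y‖ := by
      simp [Finset.sum_const, mul_comm]
    calc ‖M y‖ ≤ (n:ℝ)⁻¹ * ‖∑ i, PC r i y‖ := h1
      _ ≤ (n:ℝ)⁻¹ * ∑ i, ‖PC r i y‖ := by
          exact mul_le_mul_of_nonneg_left h2 (by positivity)
      _ < (n:ℝ)⁻¹ * ((n:ℝ) * ‖y‖) := by
          rw [← h4]; exact (mul_lt_mul_iff_right₀ (by positivity)).mpr h3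
      _ = ‖y‖ := by field_simp
  -- compactness on the sphere
  haveI : Nontrivial (EuclideanSpace ℝ (Fin n)) := by
    refine ⟨⟨EuclideanSpace.single ⟨0, hn⟩ 1, 0, fun h => ?_⟩⟩
    have := congrArg (fun v : EuclideanSpace ℝ (Fin n) => v ⟨0, hn⟩) h
    simp at this
  have hsph : (Metric.sphere (0 : EuclideanSpace ℝ (Fin n)) 1).Nonempty :=
    NormedSpace.sphere_nonempty.mpr zero_le_one
  obtain ⟨y0, hy0, hmax⟩ := (isCompact_sphere (0 : EuclideanSpace ℝ (Fin n)) 1).exists_isMaxOn hsph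
    (continuous_norm.comp M.continuous).continuousOn
  have hy0n : ‖y0‖ = 1 := by simpa using hy0
  set c := ‖M y0‖ with hc
  have hclt : c < 1 := by
    have := hpt y0 (by intro h; rw [h] at hy0n; simp at hy0n)
    rwa [hy0n] at this
  have hbound : ∀ y : EuclideanSpace ℝ (Fin n), ‖M y‖ ≤ c * ‖y‖ := by
    intro y
    rcases eq_or_ne y 0 with rfl | hy
    · simp
    · have hyn : (0:ℝ) < ‖y‖ := norm_pos_iff.mpr hy
      have hu : (‖y‖⁻¹ • y) ∈ Metric.sphere (0 : EuclideanSpace ℝ (Fin n)) 1 := by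
        simp [norm_smul, abs_of_nonneg (le_of_lt (inv_pos.mpr hyn)),
          inv_mul_cancel₀ (ne_of_gt hyn)]
      have := hmax hu
      simp only [Set.mem_setOf_eq, Function.comp_apply] at this
      rw [map_smul, norm_smul, Real.norm_eq_abs,
        abs_of_nonneg (le_of_lt (inv_pos.mpr hyn))] at this
      calc ‖M y‖ = ‖y‖ * (‖y‖⁻¹ * ‖M y‖) := by field_simp
        _ ≤ ‖y‖ * c := mul_le_mul_of_nonneg_left this (le_of_lt hyn)
        _ = c * ‖y‖ := mul_comm _ _
  have : ‖M‖ ≤ c := M.opNorm_le_bound (norm_nonneg _) hbound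
  exact lt_of_le_of_lt this hclt

/-- Consider the distributed algorithm on the complete graph with
self-loops on `n` vertices (so `d_i = n` and every agent is a neighbor of every agent):
`x_i(t+1) = x_i(t) − (1/n) P_i (n x_i(t) − ∑_{j=1}^n x_j(t))`. If each initial state
satisfies `⟨A_i, x_i(0)⟩ = b_i`, then every agent's state converges to the true
solution: `lim_{t→∞} x_i(t) = x*` for every `i`. -/
theorem stmt16 (n : ℕ) (hn : 1 ≤ n)
    (A : Matrix (Fin n) (Fin n) ℝ)
    (r : Fin n → EuclideanSpace ℝ (Fin n))
    (hrow : ∀ i j, A i j = r i j)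
    (hinv : IsUnit A.det)
    (hne : ∀ i, r i ≠ 0)
    (xs : EuclideanSpace ℝ (Fin n)) (b : Fin n → ℝ)
    (hb : ∀ j, b j = ⟪r j, xs⟫)
    (x : ℕ → Fin n → EuclideanSpace ℝ (Fin n))
    (hinit : ∀ i, ⟪r i, x 0 i⟫ = b i)
    (hupdate : ∀ t i, x (t + 1) i =
      x t i - (n : ℝ)⁻¹ • proj r i ((n : ℝ) • x t i - ∑ j, x t j)) :
    ∀ i, Filter.Tendsto (fun t => x t i) Filter.atTop (nhds xs) := by
  have hn0 : (n:ℝ) ≠ 0 := by positivity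
  -- separation from invertibility
  have hsep : ∀ y : EuclideanSpace ℝ (Fin n), y ≠ 0 → ∃ i, ⟪r i, y⟫ ≠ 0 := by
    intro y hy
    have hinj : Function.Injective A.mulVec :=
      Matrix.mulVec_injective_iff_isUnit.mpr ((Matrix.isUnit_iff_isUnit_det A).mpr hinv)
    have hAy : A.mulVec (fun j => y j) ≠ 0 := by
      intro h
      apply hy
      have : (fun j => y j) = (0 : Fin n → ℝ) := hinj (by rw [h, Matrix.mulVec_zero])
      ext j
      exact congrFun this j
    obtain ⟨i, hi⟩ := Function.ne_iff.mp hAy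
    refine ⟨i, ?_⟩
    have : ⟪r i, y⟫ = A.mulVec (fun j => y j) i := by
      simp [Matrix.mulVec, dotProduct, PiLp.inner_apply, RCLike.inner_apply,
        hrow, mul_comm]
    rw [this]
    simpa using hi
  -- the invariant
  have hinvar : ∀ t i, ⟪r i, x t i - xs⟫ = 0 := by
    intro t
    induction t with
    | zero => intro i; rw [inner_sub_right, hinit i, hb i, sub_self]
    | succ t ih =>
      intro i
      rw [hupdate t i, ← PC_apply]
      have : x t i - (n:ℝ)⁻¹ • PC r i ((n:ℝ) • x t i - ∑ j, x t j) - xs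
          = (x t i - xs) - (n:ℝ)⁻¹ • PC r i ((n:ℝ) • x t i - ∑ j, x t j) := by abel
      rw [this, inner_sub_right, real_inner_smul_right, inner_PC r i (hne i), ih i]
      ring
  set M : EuclideanSpace ℝ (Fin n) →L[ℝ] EuclideanSpace ℝ (Fin n) :=
      (n:ℝ)⁻¹ • ∑ i, PC r i with hM
  set S : ℕ → EuclideanSpace ℝ (Fin n) := fun t => ∑ j, (x t j - xs) with hS
  -- key recursion for each agent
  have hkey : ∀ t i, x (t+1) i - xs = (n:ℝ)⁻¹ • PC r i (S t) := by
    intro t i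
    have hsum : (n:ℝ) • x t i - ∑ j, x t j = (n:ℝ) • (x t i - xs) - S t := by
      rw [hS]
      simp only [Finset.sum_sub_distrib, Finset.sum_const, Finset.card_univ,
        Fintype.card_fin, smul_sub]
      rw [Nat.cast_smul_eq_nsmul ℝ n xs]
      abel
    rw [hupdate t i, ← PC_apply, hsum, map_sub, map_smul,
      PC_of_inner_zero r i _ (hinvar t i), smul_sub, smul_smul,
      inv_mul_cancel₀ hn0, one_smul]
    abel
  -- recursion for the sum
  have hSrec : ∀ t, S (t+1) = M (S t) := by
    intro t
    rw [hS]
    simp only [hkey t]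
    rw [hM, ContinuousLinearMap.smul_apply, ContinuousLinearMap.sum_apply,
      Finset.smul_sum]
  have hSt : ∀ t, S t = (M ^ t) (S 0) := by
    intro t
    induction t with
    | zero => simp
    | succ t ih => rw [hSrec t, ih, pow_succ', ContinuousLinearMap.mul_apply]
  -- convergence
  have hMlt : ‖M‖ < 1 := norm_M_lt_one hn r hne hsep
  have hMpow : Filter.Tendsto (fun t => M ^ t) Filter.atTop (nhds 0) :=
    tendsto_pow_atTop_nhds_zero_of_norm_lt_one hMlt
  have hS0 : Filter.Tendsto S Filter.atTop (nhds 0) := by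
    have hcont := (ContinuousLinearMap.apply ℝ (EuclideanSpace ℝ (Fin n))
      (S 0)).continuous.tendsto 0
    have h := hcont.comp hMpow
    simp only [Function.comp_def, ContinuousLinearMap.apply_apply, map_zero] at h
    exact h.congr fun t => (hSt t).symm
  intro i
  have h1 : Filter.Tendsto (fun t => x (t+1) i) Filter.atTop (nhds xs) := by
    have h2 : Filter.Tendsto (fun t => (n:ℝ)⁻¹ • PC r i (S t)) Filter.atTop (nhds 0) := by
      have := (((PC r i).continuous.tendsto 0).comp hS0).const_smul ((n:ℝ)⁻¹)
      simpa [Function.comp_def] using this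
    have h3 := Filter.Tendsto.add (tendsto_const_nhds (x := xs)) h2
    rw [add_zero] at h3
    refine h3.congr fun t => ?_
    rw [← hkey t i]; abel
  exact (Filter.tendsto_add_atTop_iff_nat 1).mp h1
end
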